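/- If X is a nonzero Hermitian matrix with trace zero satisfying ‖X‖₂ = (1/√2)‖X‖₁, then X has exactly two nonzero eigenvalues, which are +t and −t for some t > 0; in particular rank(X) = 2. -/

import Mathlib

open Matrix Kronecker BigOperators
open scoped ComplexOrder

noncomputable def traceNorm {n : Type*} [Fintype n] [DecidableEq n] (X : Matrix n n ℂ) : ℝ :=
  (((Matrix.posSemidef_conjTranspose_mul_self X).1.eigenvectorUnitary.1 *
      diagonal (((↑) : ℝ → ℂ) ∘ Real.sqrt ∘ (Matrix.posSemidef_conjTranspose_mul_self X).1.eigenvalues) *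
      (star (Matrix.posSemidef_conjTranspose_mul_self X).1.eigenvectorUnitary : Matrix n n ℂ)).trace).re

noncomputable def hsNorm {n : Type*} [Fintype n] (X : Matrix n n ℂ) : ℝ :=
  Real.sqrt ((Xᴴ * X).trace.re)

noncomputable def singularValues {n : Type*} [Fintype n] [DecidableEq n] (Y : Matrix n n ℂ) :
    n → ℝ :=
  fun i => Real.sqrt ((Matrix.posSemidef_conjTranspose_mul_self Y).1.eigenvalues i)

/-- Partial transpose on the first tensor factor. -/
def ptransp {d k : ℕ} (X : Matrix (Fin d × Fin k) (Fin d × Fin k) ℂ) :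
    Matrix (Fin d × Fin k) (Fin d × Fin k) ℂ :=
  fun p q => X (q.1, p.2) (p.1, q.2)

/-- Partial trace over the first tensor factor. -/
noncomputable def ptraceH {d k : ℕ} (X : Matrix (Fin d × Fin k) (Fin d × Fin k) ℂ) :
    Matrix (Fin k) (Fin k) ℂ :=
  fun j j' => ∑ i, X (i, j) (i, j')

def vec {d : ℕ} (A : Matrix (Fin d) (Fin d) ℂ) : Fin d × Fin d → ℂ := fun p => A p.1 p.2

/-- Outer product |v⟩⟨w|. -/
def outer {n : Type*} (v w : n → ℂ) : Matrix n n ℂ := fun i j => v i * star (w j)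

/-- The swap operator F(e_i ⊗ e_j) = e_j ⊗ e_i. -/
def swapOp (d : ℕ) : Matrix (Fin d × Fin d) (Fin d × Fin d) ℂ :=
  fun p q => if p.1 = q.2 ∧ p.2 = q.1 then 1 else 0

/-- Blockwise action of Φ ⊗ id on operators on H ⊗ K. -/
def tensorExt {d k : ℕ} (Φ : Matrix (Fin d) (Fin d) ℂ → Matrix (Fin d) (Fin d) ℂ)
    (Z : Matrix (Fin d × Fin k) (Fin d × Fin k) ℂ) :
    Matrix (Fin d × Fin k) (Fin d × Fin k) ℂ :=
  fun p q => Φ (fun a b => Z (a, p.2) (b, q.2)) p.1 q.1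

/-- Diamond norm (stabilized at ancilla dimension d). -/
noncomputable def diamondNorm {d : ℕ}
    (Φ : Matrix (Fin d) (Fin d) ℂ → Matrix (Fin d) (Fin d) ℂ) : ℝ :=
  ⨆ ρ : {ρ : Matrix (Fin d × Fin d) (Fin d × Fin d) ℂ // ρ.PosSemidef ∧ ρ.trace = 1},
    traceNorm (tensorExt Φ ρ.1)

open scoped MatrixOrder in
lemma herm_norms {n : ℕ} (X : Matrix (Fin n) (Fin n) ℂ) (hX : X.IsHermitian) :
    traceNorm X = ∑ i, |hX.eigenvalues i| ∧
    (Xᴴ * X).trace.re = ∑ i, (hX.eigenvalues i) ^ 2 ∧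
    X.trace = ∑ i, ((hX.eigenvalues i : ℝ) : ℂ) := by
  set U : Matrix (Fin n) (Fin n) ℂ := (hX.eigenvectorUnitary : Matrix (Fin n) (Fin n) ℂ) with hUdef
  have hU2 : star U * U = 1 := (Matrix.mem_unitaryGroup_iff').mp hX.eigenvectorUnitary.2
  have key : ∀ D1 D2 : Matrix (Fin n) (Fin n) ℂ,
      (U * D1 * star U) * (U * D2 * star U) = U * (D1 * D2) * star U := by
    intro D1 D2
    calc (U * D1 * star U) * (U * D2 * star U)
        = U * D1 * (star U * U) * D2 * star U := by noncomm_ring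
      _ = U * (D1 * D2) * star U := by rw [hU2]; noncomm_ring
  have htrU : ∀ D : Matrix (Fin n) (Fin n) ℂ, (U * D * star U).trace = D.trace := by
    intro D
    rw [Matrix.trace_mul_cycle, hU2, one_mul]
  set e : Fin n → ℂ := RCLike.ofReal ∘ hX.eigenvalues with he
  have hspec : X = U * Matrix.diagonal e * star U := hX.spectral_theorem
  set d : Fin n → ℂ := fun i => ((|hX.eigenvalues i| : ℝ) : ℂ) with hd
  have hdd : Matrix.diagonal d * Matrix.diagonal d = Matrix.diagonal e * Matrix.diagonal e := by
    rw [Matrix.diagonal_mul_diagonal, Matrix.diagonal_mul_diagonal]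
    have hfun : (fun i => d i * d i) = (fun i => e i * e i) := by
      funext i
      show ((|hX.eigenvalues i| : ℝ) : ℂ) * ((|hX.eigenvalues i| : ℝ) : ℂ)
        = ((hX.eigenvalues i : ℝ) : ℂ) * ((hX.eigenvalues i : ℝ) : ℂ)
      rw [← Complex.ofReal_mul, ← Complex.ofReal_mul, abs_mul_abs_self]
    rw [hfun]
  have hXX : Xᴴ * X = U * (Matrix.diagonal e * Matrix.diagonal e) * star U := by
    conv_lhs => rw [hX.eq, hspec]
    rw [key]
  -- the sqrt
  set B : Matrix (Fin n) (Fin n) ℂ := U * Matrix.diagonal d * star U with hB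
  have hdnn : (0 : Fin n → ℂ) ≤ d := by
    intro i
    simp only [hd, Pi.zero_apply]
    rw [Complex.zero_le_real]
    exact abs_nonneg _
  have hBpsd : B.PosSemidef := by
    have := (Matrix.PosSemidef.diagonal hdnn).mul_mul_conjTranspose_same U
    simpa [hB, Matrix.star_eq_conjTranspose] using this
  have hBsq : B ^ 2 = Xᴴ * X := by
    rw [sq, hB, key, hdd, hXX]
  have hsqrt : B = (Matrix.posSemidef_conjTranspose_mul_self X).1.eigenvectorUnitary.1 *
      diagonal (((↑) : ℝ → ℂ) ∘ Real.sqrt ∘ (Matrix.posSemidef_conjTranspose_mul_self X).1.eigenvalues) *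
      (star (Matrix.posSemidef_conjTranspose_mul_self X).1.eigenvectorUnitary : Matrix (Fin n) (Fin n) ℂ) := by
    have h1 : CFC.sqrt (Xᴴ * X) = B := CFC.sqrt_unique (by rw [← sq]; exact hBsq) hBpsd.nonneg
    rw [← h1, CFC.sqrt_eq_cfc, cfc_nnreal_eq_real _ (Xᴴ * X) (Matrix.posSemidef_conjTranspose_mul_self X).nonneg,
      (Matrix.posSemidef_conjTranspose_mul_self X).1.cfc_eq]
    simp only [IsHermitian.cfc, Unitary.conjStarAlgAut_apply]
    refine congrArg (fun D => _ * D * _) (congrArg diagonal (funext fun i => ?_))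
    simp [Real.coe_sqrt, Real.coe_toNNReal', (Matrix.posSemidef_conjTranspose_mul_self X).eigenvalues_nonneg i]
  refine ⟨?_, ?_, ?_⟩
  · rw [traceNorm, ← hsqrt, hB, htrU, Matrix.trace_diagonal, Complex.re_sum]
    simp [hd]
  swap
  · conv_lhs => rw [hspec]
    rw [htrU, Matrix.trace_diagonal]
    rfl
  rw [hXX, htrU]
  rw [show Matrix.diagonal e * (Matrix.diagonal e) = Matrix.diagonal (e * e) from
      Matrix.diagonal_mul_diagonal e e]
  rw [Matrix.trace_diagonal, Complex.re_sum]
  congr 1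
  funext i
  show (((hX.eigenvalues i : ℝ) : ℂ) * ((hX.eigenvalues i : ℝ) : ℂ)).re = _
  rw [← Complex.ofReal_mul, Complex.ofReal_re, sq]

lemma combo {n : ℕ} (μ : Fin n → ℝ) (h0 : ∑ i, μ i = 0)
    (hne : ∃ i, μ i ≠ 0) (h : ∑ i, μ i ^ 2 = (∑ i, |μ i|) ^ 2 / 2) :
    ∃ t : ℝ, 0 < t ∧ ∃ i j : Fin n, i ≠ j ∧ μ i = t ∧ μ j = -t ∧
      ∀ l, l ≠ i → l ≠ j → μ l = 0 := by
  set s : ℝ := ∑ i, |μ i| with hs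
  obtain ⟨k, hk⟩ := hne
  have hspos : 0 < s := by
    apply Finset.sum_pos' (fun i _ => abs_nonneg _)
    exact ⟨k, Finset.mem_univ k, abs_pos.mpr hk⟩
  -- each |μ i| ≤ s / 2
  have hmax : ∀ ν : Fin n → ℝ, (∑ i, ν i = 0) → (∑ i, |ν i| = s) →
      ∀ i, ν i ≤ s / 2 := by
    intro ν hν0 hνs i
    have h2 : ∀ a : ℝ, 2 * max a 0 = a + |a| := by
      intro a
      rcases le_or_gt 0 a with ha | ha
      · rw [max_eq_left ha, abs_of_nonneg ha]; ring
      · rw [max_eq_right ha.le, abs_of_neg ha]; ring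
    have hsum : ∑ i, max (ν i) 0 = s / 2 := by
      have : 2 * ∑ i, max (ν i) 0 = s := by
        rw [Finset.mul_sum]
        calc ∑ i, 2 * max (ν i) 0 = ∑ i, (ν i + |ν i|) := by
              exact Finset.sum_congr rfl fun i _ => h2 (ν i)
          _ = (∑ i, ν i) + ∑ i, |ν i| := Finset.sum_add_distrib
          _ = s := by rw [hν0, hνs, zero_add]
      linarith
    calc ν i ≤ max (ν i) 0 := le_max_left _ _
      _ ≤ ∑ j, max (ν j) 0 :=
          Finset.single_le_sum (fun j _ => le_max_right (ν j) 0) (Finset.mem_univ i)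
      _ = s / 2 := hsum
  have habs : ∀ i, |μ i| ≤ s / 2 := by
    intro i
    rw [abs_le]
    constructor
    · have := hmax (fun j => -μ j) (by simp [h0]) (by simpa using hs.symm) i
      linarith
    · exact hmax μ h0 hs.symm i
  -- equality in the sum forces each nonzero |μ i| = s/2
  have hterm : ∀ i ∈ Finset.univ, (μ i) ^ 2 ≤ |μ i| * (s / 2) := by
    intro i _
    calc (μ i) ^ 2 = |μ i| * |μ i| := by rw [sq, ← abs_mul_abs_self]
      _ ≤ |μ i| * (s / 2) := mul_le_mul_of_nonneg_left (habs i) (abs_nonneg _)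
  have hsum_eq : ∑ i, (μ i) ^ 2 = ∑ i, |μ i| * (s / 2) := by
    rw [← Finset.sum_mul, ← hs, h]
    ring
  have heach : ∀ i, (μ i) ^ 2 = |μ i| * (s / 2) := by
    intro i
    have := (Finset.sum_eq_sum_iff_of_le hterm).mp hsum_eq i (Finset.mem_univ i)
    exact this
  have hzero_or : ∀ i, μ i = 0 ∨ |μ i| = s / 2 := by
    intro i
    rcases eq_or_ne (μ i) 0 with h' | h'
    · exact Or.inl h'
    · right
      have h1 : |μ i| * |μ i| = |μ i| * (s / 2) := by
        rw [abs_mul_abs_self, ← sq, heach i]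
      exact mul_left_cancel₀ (abs_ne_zero.mpr h') h1
  set t : ℝ := s / 2 with ht
  have htpos : 0 < t := by positivity
  -- exists positive and negative entries
  have hpos : ∃ i, 0 < μ i := by
    by_contra hcon
    push_neg at hcon
    have : ∀ i ∈ Finset.univ, μ i = 0 :=
      fun i _ => le_antisymm (hcon i) (by
        by_contra hlt
        push_neg at hlt
        have : ∑ i, μ i < 0 := by
          apply Finset.sum_neg' (fun j _ => hcon j) ⟨i, Finset.mem_univ i, hlt⟩
        linarith)
    exact hk (this k (Finset.mem_univ k))
  have hneg : ∃ j, μ j < 0 := by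
    by_contra hcon
    push_neg at hcon
    obtain ⟨i, hi⟩ := hpos
    have : 0 < ∑ j, μ j := Finset.sum_pos' (fun j _ => hcon j) ⟨i, Finset.mem_univ i, hi⟩
    linarith
  obtain ⟨i, hi⟩ := hpos
  obtain ⟨j, hj⟩ := hneg
  have hij : i ≠ j := fun h' => absurd (h' ▸ hi) (not_lt.mpr hj.le)
  have hit : μ i = t := by
    rcases hzero_or i with h' | h'
    · linarith
    · rw [← h', abs_of_pos hi]
  have hjt : μ j = -t := by
    rcases hzero_or j with h' | h'
    · linarith
    · rw [abs_of_neg hj] at h'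
      linarith
  refine ⟨t, htpos, i, j, hij, hit, hjt, ?_⟩
  intro l hli hlj
  by_contra hl
  have hlt : |μ l| = t := (hzero_or l).resolve_left hl
  have hsub : ({i, j, l} : Finset (Fin n)) ⊆ Finset.univ := Finset.subset_univ _
  have hsum3 : ∑ m ∈ ({i, j, l} : Finset (Fin n)), |μ m| = 3 * t := by
    rw [Finset.sum_insert (by simp [hij, (Ne.symm hli)]),
      Finset.sum_insert (by simp [Ne.symm hlj]), Finset.sum_singleton]
    rw [hlt, hit, hjt, abs_of_pos htpos, abs_of_neg (by linarith : -t < 0)]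
    ring
  have : (3 : ℝ) * t ≤ s := by
    rw [← hsum3, hs]
    exact Finset.sum_le_sum_of_subset_of_nonneg hsub (fun m _ _ => abs_nonneg _)
  rw [ht] at this
  linarith

theorem traceless_hermitian_hs_eq_trace_rank_two {n : ℕ}
    (X : Matrix (Fin n) (Fin n) ℂ) (hX : X.IsHermitian) (htr : X.trace = 0)
    (hne : X ≠ 0) (heq : hsNorm X = (1 / Real.sqrt 2) * traceNorm X) :
    (∃ t : ℝ, 0 < t ∧ ∃ i j : Fin n, i ≠ j ∧ hX.eigenvalues i = t ∧
      hX.eigenvalues j = -t ∧ ∀ l, l ≠ i → l ≠ j → hX.eigenvalues l = 0) ∧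
    X.rank = 2 := by
  obtain ⟨hTN, hHS, hTR⟩ := herm_norms X hX
  set μ : Fin n → ℝ := hX.eigenvalues with hμ
  -- trace condition
  have hsum0 : ∑ i, μ i = 0 := by
    have h2 : ((∑ i, μ i : ℝ) : ℂ) = 0 := by
      rw [Complex.ofReal_sum, ← hTR, htr]
    exact_mod_cast h2
  -- nonzero eigenvalue exists
  have hexne : ∃ i, μ i ≠ 0 := by
    by_contra hcon
    push_neg at hcon
    apply hne
    have hzero : Matrix.diagonal (RCLike.ofReal ∘ μ : Fin n → ℂ) = 0 := by
      have : (RCLike.ofReal ∘ μ : Fin n → ℂ) = 0 := by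
        funext i
        simp [hcon i]
      rw [this]
      exact Matrix.diagonal_zero
    calc X = (hX.eigenvectorUnitary : Matrix (Fin n) (Fin n) ℂ) *
          Matrix.diagonal (RCLike.ofReal ∘ μ) *
          star (hX.eigenvectorUnitary : Matrix (Fin n) (Fin n) ℂ) := hX.spectral_theorem
      _ = 0 := by rw [hzero, mul_zero, zero_mul]
  -- translate heq
  have hS2nn : 0 ≤ ∑ i, μ i ^ 2 := Finset.sum_nonneg fun i _ => sq_nonneg _
  have hkey : ∑ i, μ i ^ 2 = (∑ i, |μ i|) ^ 2 / 2 := by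
    have h1 : Real.sqrt (∑ i, μ i ^ 2) = (1 / Real.sqrt 2) * ∑ i, |μ i| := by
      rw [← hTN, ← hHS]
      exact heq
    have h2 : ∑ i, μ i ^ 2 = Real.sqrt (∑ i, μ i ^ 2) ^ 2 :=
      (Real.sq_sqrt hS2nn).symm
    rw [h2, h1, mul_pow, div_pow, one_pow, Real.sq_sqrt (by norm_num : (0:ℝ) ≤ 2)]
    ring
  obtain ⟨t, htpos, i, j, hij, hit, hjt, hrest⟩ := combo μ hsum0 hexne hkey
  refine ⟨⟨t, htpos, i, j, hij, hit, hjt, hrest⟩, ?_⟩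
  -- rank
  rw [hX.rank_eq_card_non_zero_eigs]
  rw [Fintype.card_subtype]
  have hfilter : Finset.univ.filter (fun l => hX.eigenvalues l ≠ 0) = {i, j} := by
    ext l
    simp only [Finset.mem_filter, Finset.mem_univ, true_and, Finset.mem_insert,
      Finset.mem_singleton]
    constructor
    · intro hl
      by_contra hcon
      push_neg at hcon
      exact hl (hrest l hcon.1 hcon.2)
    · rintro (rfl | rfl)
      · rw [← hμ, hit]; exact ne_of_gt htpos
      · rw [← hμ, hjt]; exact ne_of_lt (by linarith)
  rw [hfilter, Finset.card_pair hij]
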